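/- In the one-dimensional second example, the function V(x,m,t) = (x − ∫_ℝ ξ m(ξ) dξ)² is a (classical, hence viscosity) solution of the Isaacs equation −V_t + max_{a∈[−c,c]}{−V_x a} + inf_{b∈B}⟨D_m V, (bm)_ξ⟩_{L²} = 0 with final condition V(x,m,T) = (x − ∫ ξm dξ)²; explicitly, setting z = 2(x − ∫ ξm dξ), one has max_{a∈[−c,c]}{−za} + inf_{b∈B} ∫_ℝ (−zξ)(bm)_ξ dξ = |z|c − |z|c = 0 whenever ∫ m = 1, m ≥ 0, and m has compact support. -/

import Mathlib

open Set MeasureTheory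

/-- The integral over `ℝ` of the derivative of a differentiable, compactly supported
function (with integrable derivative) vanishes. -/
lemma my_integral_deriv_eq_zero {g : ℝ → ℝ} (hg : Differentiable ℝ g)
    (hs : HasCompactSupport g) (hint : Integrable (deriv g)) :
    (∫ x, deriv g x) = 0 := by
  obtain ⟨r, hr⟩ := hs.isCompact.isBounded.subset_closedBall 0
  set R : ℝ := |r| + 1 with hR
  have hRpos : (0:ℝ) < R := by positivity
  have hsub : tsupport g ⊆ Icc (-R) R := by
    refine hr.trans ?_
    rw [Real.closedBall_eq_Icc]
    apply Icc_subset_Icc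
    · have := le_abs_self r; simp only [hR]; linarith
    · have := le_abs_self r; simp only [hR]; linarith
  have hgR : g (R + 1) = 0 := by
    apply image_eq_zero_of_notMem_tsupport
    intro h
    have := (hsub h).2
    linarith
  have hgL : g (-(R + 1)) = 0 := by
    apply image_eq_zero_of_notMem_tsupport
    intro h
    have := (hsub h).1
    linarith
  have h1 : (∫ x, deriv g x) = ∫ x in Ioc (-(R + 1)) (R + 1), deriv g x := by
    refine (setIntegral_eq_integral_of_forall_compl_eq_zero ?_).symm
    intro y hy
    by_contra hne
    have : y ∈ tsupport g := support_deriv_subset (Function.mem_support.mpr hne)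
    have h2 := hsub this
    exact hy ⟨by linarith [h2.1], by linarith [h2.2]⟩
  have h2 : (∫ x in Ioc (-(R + 1)) (R + 1), deriv g x)
      = ∫ x in (-(R + 1))..(R + 1), deriv g x :=
    (intervalIntegral.integral_of_le (by linarith)).symm
  have h3 : (∫ x in (-(R + 1))..(R + 1), deriv g x) = g (R + 1) - g (-(R + 1)) :=
    intervalIntegral.integral_deriv_eq_sub (fun y _ => hg y) hint.intervalIntegrable
  rw [h1, h2, h3, hgR, hgL, sub_zero]

/-- Integration by parts: `∫ (−zξ)(bm)' dξ = z ∫ b m`. -/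
lemma my_key_ibp (c c₁ z : ℝ) (m : ℝ → ℝ) (hmc : HasCompactSupport m)
    (hmd : ContDiff ℝ 1 m) (b : ℝ → ℝ) (hb : Differentiable ℝ b)
    (hbc : ∀ y, |b y| ≤ c) (hbc₁ : ∀ y, |deriv b y| ≤ c₁) :
    (∫ ξ, -(z * ξ) * deriv (fun η => b η * m η) ξ) = z * ∫ ξ, b ξ * m ξ := by
  have hmdiff : Differentiable ℝ m := hmd.differentiable one_ne_zero
  have hmcont : Continuous m := hmdiff.continuous
  have hm'cont : Continuous (deriv m) := hmd.continuous_deriv le_rfl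
  set f : ℝ → ℝ := fun η => b η * m η with hfdef
  have hfdiff : Differentiable ℝ f := hb.mul hmdiff
  have hfc : HasCompactSupport f := hmc.mul_left
  have hfint : Integrable f :=
    (hb.continuous.mul hmcont).integrable_of_hasCompactSupport hfc
  set g : ℝ → ℝ := fun ξ => ξ * f ξ with hgdef
  have hgdiff : Differentiable ℝ g := differentiable_id.mul hfdiff
  have hgc : HasCompactSupport g := hfc.mul_left
  have hderivf : ∀ ξ, deriv f ξ = deriv b ξ * m ξ + b ξ * deriv m ξ := fun ξ =>
    ((hb ξ).hasDerivAt.mul (hmdiff ξ).hasDerivAt).deriv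
  have hderivg : ∀ ξ, deriv g ξ = f ξ + ξ * deriv f ξ := by
    intro ξ
    have h1 : HasDerivAt g (1 * f ξ + ξ * deriv f ξ) ξ :=
      (hasDerivAt_id ξ).mul (hfdiff ξ).hasDerivAt
    rw [h1.deriv]; ring
  have hint1 : Integrable (fun ξ => deriv b ξ * (ξ * m ξ)) := by
    refine Integrable.bdd_mul ?_ (aestronglyMeasurable_deriv b volume) (c := c₁) (Filter.Eventually.of_forall fun y => ?_)
    · exact (continuous_id.mul hmcont).integrable_of_hasCompactSupport hmc.mul_left
    · simpa [Real.norm_eq_abs] using hbc₁ y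
  have hint2 : Integrable (fun ξ => b ξ * (ξ * deriv m ξ)) := by
    refine Integrable.bdd_mul ?_ hb.continuous.aestronglyMeasurable (c := c) (Filter.Eventually.of_forall fun y => ?_)
    · exact (continuous_id.mul hm'cont).integrable_of_hasCompactSupport hmc.deriv.mul_left
    · simpa [Real.norm_eq_abs] using hbc y
  have hgint : Integrable (deriv g) := by
    have : deriv g = fun ξ => f ξ + (deriv b ξ * (ξ * m ξ) + b ξ * (ξ * deriv m ξ)) := by
      funext ξ
      rw [hderivg ξ, hderivf ξ]; ring
    rw [this]
    exact hfint.add (hint1.add hint2)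
  have hzero : (∫ x, deriv g x) = 0 := my_integral_deriv_eq_zero hgdiff hgc hgint
  calc (∫ ξ, -(z * ξ) * deriv f ξ) = ∫ ξ, (-z) * (deriv g ξ - f ξ) := by
        congr 1
        funext ξ
        rw [hderivg ξ]; ring
    _ = (-z) * ∫ ξ, (deriv g ξ - f ξ) := integral_const_mul (-z) _
    _ = (-z) * ((∫ ξ, deriv g ξ) - ∫ ξ, f ξ) := by rw [integral_sub hgint hfint]
    _ = z * ∫ ξ, f ξ := by rw [hzero]; ring

/-- in the one-dimensional second example, the function
`V(x,m,t) = (x − ∫ ξ m(ξ) dξ)²` is a classical solution of the Isaacs equation: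
`V` does not depend on `t` (so `V_t = 0`), and, setting `z = 2(x − ∫ ξ m dξ)`, one
has `max_{a∈[−c,c]} {−za} + inf_{b∈B} ∫ (−zξ)(bm)_ξ dξ = |z|c − |z|c = 0` whenever
`m ≥ 0`, `∫ m = 1` and `m` is a compactly supported `C¹` density.  Here
`B = {b : ‖b‖_∞ ≤ c, ‖b_x‖_∞ ≤ c₁}` (taken differentiable). -/
theorem stmt_16 (c c₁ T : ℝ) (hc : 0 < c) (hc₁ : 0 ≤ c₁) (hT : 0 < T)
    (m : ℝ → ℝ) (hm0 : ∀ ξ, 0 ≤ m ξ) (hmI : (∫ ξ, m ξ) = 1)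
    (hmc : HasCompactSupport m) (hmd : ContDiff ℝ 1 m)
    (x : ℝ) :
    (∀ t : ℝ, HasDerivAt (fun _ : ℝ => (x - ∫ ξ, ξ * m ξ) ^ 2) 0 t) ∧
    (⨆ a : ↥(Icc (-c) c), -(2 * (x - ∫ ξ, ξ * m ξ) * a.1)) +
      (⨅ b : ↥{b : ℝ → ℝ | Differentiable ℝ b ∧ (∀ y, |b y| ≤ c) ∧
          ∀ y, |deriv b y| ≤ c₁},
        ∫ ξ, -(2 * (x - ∫ η, η * m η) * ξ) * deriv (fun η => b.1 η * m η) ξ) = 0 := by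
  constructor
  · exact fun t => hasDerivAt_const t _
  set z : ℝ := 2 * (x - ∫ ξ, ξ * m ξ) with hzdef
  set S : Set (ℝ → ℝ) := {b : ℝ → ℝ | Differentiable ℝ b ∧ (∀ y, |b y| ≤ c) ∧
      ∀ y, |deriv b y| ≤ c₁} with hSdef
  -- the optimal constant control for the inf
  set k : ℝ := if 0 ≤ z then -c else c with hkdef
  have hk_abs : |k| ≤ c := by
    rw [hkdef]; split <;> rw [abs_le] <;> constructor <;> linarith
  have hzk : z * k = -(|z| * c) := by
    rw [hkdef]
    by_cases h : 0 ≤ z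
    · rw [if_pos h, abs_of_nonneg h]; ring
    · rw [if_neg h, abs_of_neg (lt_of_not_ge h)]; ring
  have hkS : (fun _ : ℝ => k) ∈ S := by
    refine ⟨differentiable_const k, fun y => hk_abs, fun y => ?_⟩
    simp [deriv_const, hc₁]
  haveI : Nonempty ↥S := ⟨⟨fun _ => k, hkS⟩⟩
  haveI : Nonempty ↥(Icc (-c) c) := ⟨⟨0, by constructor <;> linarith⟩⟩
  have hmcont : Continuous m := hmd.continuous
  have hmint : Integrable m := hmcont.integrable_of_hasCompactSupport hmc
  -- compute the sup
  have hbd : ∀ a : ↥(Icc (-c) c), -(z * a.1) ≤ |z| * c := by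
    intro a
    calc -(z * a.1) ≤ |z * a.1| := neg_le_abs _
      _ = |z| * |a.1| := abs_mul _ _
      _ ≤ |z| * c := by
          refine mul_le_mul_of_nonneg_left ?_ (abs_nonneg z)
          exact abs_le.mpr ⟨a.2.1, a.2.2⟩
  have hbddA : BddAbove (Set.range fun a : ↥(Icc (-c) c) => -(z * a.1)) := by
    refine ⟨|z| * c, ?_⟩
    rintro y ⟨a, rfl⟩
    exact hbd a
  have hsup : (⨆ a : ↥(Icc (-c) c), -(z * a.1)) = |z| * c := by
    apply le_antisymm
    · exact ciSup_le hbd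
    · have hkIcc : k ∈ Icc (-c) c := abs_le.mp hk_abs
      have : |z| * c = -(z * (⟨k, hkIcc⟩ : ↥(Icc (-c) c)).1) := by
        simp only [hzk]; ring
      rw [this]
      exact le_ciSup hbddA ⟨k, hkIcc⟩
  -- rewrite the inf via integration by parts
  have heq : (fun b : ↥S =>
        ∫ ξ, -(z * ξ) * deriv (fun η => b.1 η * m η) ξ)
      = fun b : ↥S => z * ∫ ξ, b.1 ξ * m ξ := by
    funext b
    exact my_key_ibp c c₁ z m hmc hmd b.1 b.2.1 b.2.2.1 b.2.2.2
  -- bound each term of the inf from below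
  have hbdI : ∀ b : ↥S, -(|z| * c) ≤ z * ∫ ξ, b.1 ξ * m ξ := by
    intro b
    have hint : Integrable (fun ξ => b.1 ξ * m ξ) :=
      (b.2.1.continuous.mul hmcont).integrable_of_hasCompactSupport hmc.mul_left
    have habs : |∫ ξ, b.1 ξ * m ξ| ≤ c := by
      calc |∫ ξ, b.1 ξ * m ξ| ≤ ∫ ξ, |b.1 ξ * m ξ| := by
            simpa only [Real.norm_eq_abs] using norm_integral_le_integral_norm (fun ξ => b.1 ξ * m ξ)
        _ ≤ ∫ ξ, c * m ξ := by
            refine integral_mono hint.abs (hmint.const_mul c) fun ξ => ?_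
            rw [abs_mul, abs_of_nonneg (hm0 ξ)]
            exact mul_le_mul_of_nonneg_right (b.2.2.1 ξ) (hm0 ξ)
        _ = c := by rw [integral_const_mul, hmI, mul_one]
    have : |z * ∫ ξ, b.1 ξ * m ξ| ≤ |z| * c := by
      rw [abs_mul]
      exact mul_le_mul_of_nonneg_left habs (abs_nonneg z)
    linarith [neg_abs_le (z * ∫ ξ, b.1 ξ * m ξ)]
  have hbddB : BddBelow (Set.range fun b : ↥S => z * ∫ ξ, b.1 ξ * m ξ) := by
    refine ⟨-(|z| * c), ?_⟩
    rintro y ⟨b, rfl⟩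
    exact hbdI b
  have hinf : (⨅ b : ↥S, ∫ ξ, -(z * ξ) * deriv (fun η => b.1 η * m η) ξ)
      = -(|z| * c) := by
    rw [show (⨅ b : ↥S, ∫ ξ, -(z * ξ) * deriv (fun η => b.1 η * m η) ξ)
        = ⨅ b : ↥S, z * ∫ ξ, b.1 ξ * m ξ from congrArg iInf heq]
    apply le_antisymm
    · have hval : z * (∫ ξ, (⟨fun _ => k, hkS⟩ : ↥S).1 ξ * m ξ) = -(|z| * c) := by
        simp only []
        rw [integral_const_mul, hmI, mul_one, hzk]
      calc (⨅ b : ↥S, z * ∫ ξ, b.1 ξ * m ξ)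
            ≤ z * ∫ ξ, (⟨fun _ => k, hkS⟩ : ↥S).1 ξ * m ξ := ciInf_le hbddB _
        _ = -(|z| * c) := hval
    · exact le_ciInf hbdI
  rw [hsup, hinf]
  ring
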